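/- arXiv:2209.13882 — 2 statements merged into one kernel-verified Lean document; each statement's English description precedes it below -/
import Mathlib

section
/- Let k > 1/2 be a real number, let \ell be a positive even integer, and let P be a real number with |P| > \ell/(20(2k+1)). Then \sum_{r=0}^{\ell} |(2k-1)P|^r/r! \le (24(2k+1)|P|/\ell)^{\ell}. -/
open Finset

theorem stmt_5 (k : ℝ) (hk : 1 / 2 < k) (ℓ : ℕ) (hℓ : 0 < ℓ) (hev : Even ℓ)
    (P : ℝ) (hP : |P| > (ℓ : ℝ) / (20 * (2 * k + 1))) :
    ∑ r ∈ Finset.range (ℓ + 1), |(2 * k - 1) * P| ^ r / (Nat.factorial r) ≤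
      (24 * (2 * k + 1) * |P| / ℓ) ^ ℓ := by
  have hk1 : (0:ℝ) < 2 * k + 1 := by linarith
  have hk2 : (0:ℝ) ≤ 2 * k - 1 := by linarith
  have hℓR : (0:ℝ) < ℓ := by exact_mod_cast hℓ
  have hPpos : 0 < |P| := lt_of_le_of_lt (by positivity) hP
  set A := (2 * k + 1) * |P| with hA
  have hApos : 0 < A := by positivity
  have h20 : (1:ℝ) ≤ 20 * A / ℓ := by
    rw [le_div_iff₀ hℓR]
    have h := (div_lt_iff₀ (by positivity : (0:ℝ) < 20 * (2*k+1))).mp hP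
    nlinarith
  have hq : (0:ℝ) < 20 * A / ℓ := by positivity
  have step1 : ∑ r ∈ range (ℓ+1), |(2*k-1)*P| ^ r / (Nat.factorial r) ≤
      ∑ r ∈ range (ℓ+1), A ^ r / (Nat.factorial r) := by
    apply sum_le_sum
    intro r _
    gcongr
    rw [abs_mul, abs_of_nonneg hk2]
    nlinarith [abs_nonneg P]
  have step2 : ∑ r ∈ range (ℓ+1), A ^ r / (Nat.factorial r) ≤
      (20 * A / ℓ)^ℓ * ∑ r ∈ range (ℓ+1), ((ℓ:ℝ)/20) ^ r / (Nat.factorial r) := by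
    rw [mul_sum]
    apply sum_le_sum
    intro r hr
    have hr' : r ≤ ℓ := Nat.lt_succ_iff.mp (mem_range.mp hr)
    have hkey : (20 * A / ℓ)^ℓ * (((ℓ:ℝ)/20) ^ r / (Nat.factorial r)) =
        (20 * A / ℓ)^(ℓ - r) * (A ^ r / Nat.factorial r) := by
      have hsplit : (20*A/(ℓ:ℝ))^ℓ = (20*A/ℓ)^(ℓ-r) * (20*A/ℓ)^r := by
        rw [← pow_add]; congr 1; omega
      have hcomb : ((20*A/(ℓ:ℝ)) * ((ℓ:ℝ)/20))^r = A^r := by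
        congr 1; field_simp
      rw [hsplit, ← hcomb, mul_pow]; ring
    rw [hkey]
    have h1 : (1:ℝ) ≤ (20 * A / ℓ)^(ℓ - r) := one_le_pow₀ h20
    have hnn : (0:ℝ) ≤ A ^ r / Nat.factorial r := by positivity
    nlinarith
  have step3 : ∑ r ∈ range (ℓ+1), ((ℓ:ℝ)/20) ^ r / (Nat.factorial r) ≤
      Real.exp ((ℓ:ℝ)/20) :=
    Real.sum_le_exp_of_nonneg (by positivity) _
  have he : Real.exp (1/20) ≤ 20/19 := by
    have h := Real.add_one_le_exp (-(1/20 : ℝ))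
    have hinv : Real.exp (1/20) * Real.exp (-(1/20)) = 1 := by
      rw [← Real.exp_add]; norm_num
    nlinarith [Real.exp_pos (1/20 : ℝ), Real.exp_pos (-(1/20) : ℝ)]
  have step4 : Real.exp ((ℓ:ℝ)/20) ≤ (6/5 : ℝ)^ℓ := by
    have : Real.exp ((ℓ:ℝ)/20) = Real.exp (1/20) ^ ℓ := by
      rw [← Real.exp_nat_mul]; congr 1; ring
    rw [this]
    exact pow_le_pow_left₀ (Real.exp_pos _).le (le_trans he (by norm_num)) ℓ
  calc ∑ r ∈ range (ℓ+1), |(2*k-1)*P| ^ r / (Nat.factorial r)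
      ≤ (20 * A / ℓ)^ℓ * ∑ r ∈ range (ℓ+1), ((ℓ:ℝ)/20) ^ r / (Nat.factorial r) :=
        le_trans step1 step2
    _ ≤ (20 * A / ℓ)^ℓ * (6/5 : ℝ)^ℓ := by
        gcongr
        exact le_trans step3 step4
    _ = (24 * (2 * k + 1) * |P| / ℓ) ^ ℓ := by
        rw [← mul_pow]; congr 1; field_simp; ring
end

section
/- Let x \ge 2 be real. Then \sum_{p \le x, p \text{ prime}} \log p / p = \log x + O(1), i.e., there is an absolute constant C with |\sum_{p \le x} (\log p)/p - \log x| \le C for all x \ge 2. -/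
open Finset Real

lemma pow_self_le_fact_mul_exp (n : ℕ) : ((n:ℝ))^n ≤ (n.factorial : ℝ) * Real.exp n := by
  induction n with
  | zero => simp
  | succ n ih =>
    rcases Nat.eq_zero_or_pos n with rfl | hn
    · simp [Real.exp_pos, (by linarith [Real.add_one_le_exp (1:ℝ)] : (1:ℝ) ≤ Real.exp 1)]
    have hnR : (0:ℝ) < n := by exact_mod_cast hn
    have h1 : ((n:ℝ)+1)/n ≤ Real.exp (1/n) := by
      rw [div_le_iff₀ hnR] at *
      have h := Real.add_one_le_exp (1/(n:ℝ))
      have : (1/(n:ℝ) + 1) * n = (n:ℝ) + 1 := by field_simp; ring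
      nlinarith [Real.exp_pos (1/(n:ℝ))]
    have h2 : (((n:ℝ)+1)/n)^n ≤ Real.exp 1 := by
      calc (((n:ℝ)+1)/n)^n ≤ (Real.exp (1/n))^n := by
            apply pow_le_pow_left₀ (by positivity) h1
        _ = Real.exp 1 := by
            rw [← Real.exp_nat_mul]; congr 1; field_simp
    have h3 : ((n:ℝ)+1)^n ≤ (n:ℝ)^n * Real.exp 1 := by
      have := mul_le_mul_of_nonneg_left h2 (le_of_lt (pow_pos hnR n))
      rwa [div_pow, mul_div_cancel₀] at this
      positivity
    have key : ((n:ℝ)+1)^(n+1) ≤ ((n+1).factorial : ℝ) * Real.exp (n+1) := by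
      have e1 : ((n:ℝ)+1)^(n+1) = ((n:ℝ)+1) * ((n:ℝ)+1)^n := by ring
      rw [e1]
      calc ((n:ℝ)+1) * ((n:ℝ)+1)^n ≤ ((n:ℝ)+1) * ((n:ℝ)^n * Real.exp 1) := by
            apply mul_le_mul_of_nonneg_left h3 (by positivity)
        _ ≤ ((n:ℝ)+1) * ((n.factorial : ℝ) * Real.exp n * Real.exp 1) := by
            apply mul_le_mul_of_nonneg_left _ (by positivity)
            exact mul_le_mul_of_nonneg_right ih (Real.exp_pos 1).le
        _ = ((n+1).factorial : ℝ) * Real.exp (n+1) := by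
            rw [Nat.factorial_succ]
            push_cast
            rw [Real.exp_add]
            ring
    simpa using key

lemma log_fact_lower (n : ℕ) (hn : 1 ≤ n) :
    (n:ℝ) * Real.log n - n ≤ Real.log (n.factorial : ℝ) := by
  have h0 : (0:ℝ) < n := by exact_mod_cast hn
  have hf : (0:ℝ) < (n.factorial : ℝ) := by exact_mod_cast Nat.factorial_pos n
  have := Real.log_le_log (by positivity) (pow_self_le_fact_mul_exp n)
  rw [Real.log_pow, Real.log_mul hf.ne' (Real.exp_ne_zero _), Real.log_exp] at this
  linarith

lemma log_fact_upper (n : ℕ) : Real.log (n.factorial : ℝ) ≤ (n:ℝ) * Real.log n := by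
  rcases Nat.eq_zero_or_pos n with rfl | hn
  · simp
  have := Real.log_le_log (by exact_mod_cast Nat.factorial_pos n)
    (by exact_mod_cast Nat.factorial_le_pow n : ((n.factorial : ℝ):ℝ) ≤ ((n:ℝ))^n)
  rwa [Real.log_pow] at this

lemma log_factorial_eq (n : ℕ) :
    Real.log (n.factorial : ℝ) =
      ∑ p ∈ filter Nat.Prime (range (n+1)), (n.factorial.factorization p : ℝ) * Real.log p := by
  have hsub : n.factorial.factorization.support ⊆ filter Nat.Prime (range (n+1)) := by
    intro p hp
    rw [Nat.support_factorization] at hp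
    have hpp : p.Prime := Nat.prime_of_mem_primeFactors hp
    have hdvd : p ∣ n.factorial := Nat.dvd_of_mem_primeFactors hp
    simp only [mem_filter, mem_range]
    exact ⟨Nat.lt_succ_of_le ((Nat.Prime.dvd_factorial hpp).mp hdvd), hpp⟩
  have hprod : (n.factorial : ℝ) =
      ∏ p ∈ filter Nat.Prime (range (n+1)), (p:ℝ) ^ (n.factorial.factorization p) := by
    conv_lhs => rw [← Nat.factorization_prod_pow_eq_self (Nat.factorial_ne_zero n)]
    rw [Finsupp.prod_of_support_subset _ hsub (fun p k => p ^ k) (fun i _ => pow_zero i)]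
    push_cast
    rfl
  rw [hprod, Real.log_prod]
  · apply Finset.sum_congr rfl
    intro p hp
    rw [Real.log_pow]
  · intro p hp
    have hpp : p.Prime := (mem_filter.mp hp).2
    exact pow_ne_zero _ (by exact_mod_cast hpp.ne_zero)

lemma legendre_split (n p : ℕ) (hp : p.Prime) (hpn : p ≤ n) :
    n.factorial.factorization p
      = n / p + ∑ i ∈ Ico 2 (Nat.log p n + 1), n / p ^ i := by
  haveI : Fact p.Prime := ⟨hp⟩
  rw [Nat.factorization_def _ hp, padicValNat_factorial (lt_add_one _)]
  have hb : 1 < Nat.log p n + 1 := by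
    have := Nat.log_pos hp.one_lt hpn
    omega
  rw [Finset.sum_eq_sum_Ico_succ_bot hb, pow_one]

lemma theta_le (n : ℕ) :
    ∑ p ∈ filter Nat.Prime (range (n+1)), Real.log p ≤ (n:ℝ) * Real.log 4 := by
  have h1 : Real.log (primorial n : ℝ) = ∑ p ∈ filter Nat.Prime (range (n+1)), Real.log p := by
    rw [primorial]
    push_cast
    rw [Real.log_prod]
    intro p hp
    have hpp : p.Prime := (mem_filter.mp hp).2
    exact_mod_cast hpp.ne_zero
  have h2 : (0:ℝ) < (primorial n : ℝ) := by
    exact_mod_cast primorial_pos n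
  have h3 := Real.log_le_log h2 (by exact_mod_cast primorial_le_4_pow n : ((primorial n : ℕ):ℝ) ≤ (4:ℝ)^n)
  rw [Real.log_pow] at h3
  rw [← h1]
  exact_mod_cast h3

lemma geom_tail_le (p : ℕ) (hp : 2 ≤ p) (b : ℕ) :
    ∑ i ∈ Ico 2 b, ((p:ℝ)⁻¹)^i ≤ 2 / (p:ℝ)^2 := by
  set r : ℝ := (p:ℝ)⁻¹ with hr
  have hp0 : (0:ℝ) < p := by positivity
  have hr0 : 0 ≤ r := by positivity
  have hr2 : r ≤ 1/2 := by
    rw [hr]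
    rw [inv_le_comm₀ hp0 (by norm_num)]
    norm_num
    exact_mod_cast hp
  have hrne : r ≠ 1 := by linarith
  have h1 : ∑ i ∈ Ico 2 b, r^i = r^2 * ∑ j ∈ range (b - 2), r^j := by
    rw [Finset.sum_Ico_eq_sum_range]
    rw [Finset.mul_sum]
    apply Finset.sum_congr rfl
    intro j _
    rw [← pow_add]
  have h2 : ∑ j ∈ range (b - 2), r^j ≤ 2 := by
    rw [geom_sum_eq hrne]
    have hpow : 0 ≤ r^(b-2) := by positivity
    have hrlt : r - 1 < 0 := by linarith
    rw [div_le_iff_of_neg hrlt]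
    nlinarith
  calc ∑ i ∈ Ico 2 b, r^i = r^2 * ∑ j ∈ range (b - 2), r^j := h1
    _ ≤ r^2 * 2 := by nlinarith [sq_nonneg r]
    _ = 2 / (p:ℝ)^2 := by rw [hr]; field_simp

lemma log_le_two_sqrt (p : ℕ) (hp : 1 ≤ p) : Real.log p ≤ 2 * Real.sqrt p := by
  have hp0 : (0:ℝ) < p := by exact_mod_cast hp
  have hs : (0:ℝ) < Real.sqrt p := Real.sqrt_pos.mpr hp0
  have h1 : Real.log (Real.sqrt p) ≤ Real.sqrt p - 1 := Real.log_le_sub_one_of_pos hs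
  have h2 : Real.log p = 2 * Real.log (Real.sqrt p) := by
    rw [Real.log_sqrt hp0.le]; ring
  linarith

lemma rpow_comb (p : ℕ) (hp : 1 ≤ p) :
    Real.sqrt p / (p:ℝ)^2 = 1 / (p:ℝ)^((3:ℝ)/2) := by
  have hp0 : (0:ℝ) < p := by exact_mod_cast hp
  rw [Real.sqrt_eq_rpow, ← Real.rpow_natCast (p:ℝ) 2]
  rw [div_eq_div_iff (by positivity) (by positivity)]
  rw [one_mul, ← Real.rpow_add hp0]
  norm_num

section
variable (n : ℕ)

lemma tail_term_le (n p : ℕ) (hp : p.Prime) (hpn : p ≤ n) :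
    ((∑ i ∈ Ico 2 (Nat.log p n + 1), n / p^i : ℕ) : ℝ) * Real.log p
      ≤ 4 * n / (p:ℝ)^((3:ℝ)/2) := by
  have hp2 : 2 ≤ p := hp.two_le
  have hp0 : (0:ℝ) < p := by exact_mod_cast hp.pos
  have hlog0 : 0 ≤ Real.log p := Real.log_nonneg (by exact_mod_cast hp.one_lt.le)
  have hsum : ((∑ i ∈ Ico 2 (Nat.log p n + 1), n / p^i : ℕ) : ℝ)
      ≤ (n:ℝ) * (2 / (p:ℝ)^2) := by
    push_cast
    calc (∑ i ∈ Ico 2 (Nat.log p n + 1), ((n / p^i : ℕ) : ℝ))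
        ≤ ∑ i ∈ Ico 2 (Nat.log p n + 1), (n:ℝ) * ((p:ℝ)⁻¹)^i := by
          apply Finset.sum_le_sum
          intro i _
          have := Nat.cast_div_le (m := n) (n := p^i) (α := ℝ)
          push_cast at this
          calc ((n / p^i : ℕ) : ℝ) ≤ (n:ℝ) / (p:ℝ)^i := this
            _ = (n:ℝ) * ((p:ℝ)⁻¹)^i := by rw [inv_pow, div_eq_mul_inv]
      _ = (n:ℝ) * ∑ i ∈ Ico 2 (Nat.log p n + 1), ((p:ℝ)⁻¹)^i := by rw [Finset.mul_sum]
      _ ≤ (n:ℝ) * (2 / (p:ℝ)^2) := by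
          apply mul_le_mul_of_nonneg_left (geom_tail_le p hp2 _) (by positivity)
  calc ((∑ i ∈ Ico 2 (Nat.log p n + 1), n / p^i : ℕ) : ℝ) * Real.log p
      ≤ ((n:ℝ) * (2 / (p:ℝ)^2)) * (2 * Real.sqrt p) := by
        apply mul_le_mul hsum (log_le_two_sqrt p hp.one_lt.le) hlog0 (by positivity)
    _ = 4 * n * (Real.sqrt p / (p:ℝ)^2) := by ring
    _ = 4 * n / (p:ℝ)^((3:ℝ)/2) := by
        rw [rpow_comb p hp.one_lt.le]; ring

lemma mertens_nat (n : ℕ) (hn : 2 ≤ n) :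
    |(∑ p ∈ filter Nat.Prime (range (n+1)), Real.log p / p) - Real.log n|
      ≤ Real.log 4 + 1 + 4 * ∑' m : ℕ, 1 / (m:ℝ)^((3:ℝ)/2) := by
  set K : ℝ := ∑' m : ℕ, 1 / (m:ℝ)^((3:ℝ)/2) with hKdef
  have hsummable : Summable (fun m : ℕ => 1 / (m:ℝ)^((3:ℝ)/2)) :=
    Real.summable_one_div_nat_rpow.mpr (by norm_num)
  have hK0 : 0 ≤ K := tsum_nonneg (fun m => by positivity)
  have hlog4 : 0 ≤ Real.log 4 := Real.log_nonneg (by norm_num)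
  set P := filter Nat.Prime (range (n+1)) with hPdef
  have hmem : ∀ p ∈ P, p.Prime ∧ p ≤ n := by
    intro p hp
    rw [hPdef, mem_filter, mem_range] at hp
    exact ⟨hp.2, by omega⟩
  have hn0 : (0:ℝ) < n := by positivity
  set T := ∑ p ∈ P, Real.log p / p with hTdef
  set A := ∑ p ∈ P, ((n / p : ℕ) : ℝ) * Real.log p with hAdef
  set E := ∑ p ∈ P, ((∑ i ∈ Ico 2 (Nat.log p n + 1), n / p^i : ℕ) : ℝ) * Real.log p with hEdef
  -- log n! = A + E
  have hfact : Real.log (n.factorial : ℝ) = A + E := by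
    rw [log_factorial_eq n, hAdef, hEdef, ← Finset.sum_add_distrib]
    apply Finset.sum_congr rfl
    intro p hp
    obtain ⟨hpp, hpn⟩ := hmem p hp
    rw [legendre_split n p hpp hpn]
    push_cast
    ring
  have hE0 : 0 ≤ E := by
    apply Finset.sum_nonneg
    intro p hp
    obtain ⟨hpp, _⟩ := hmem p hp
    have : 0 ≤ Real.log p := Real.log_nonneg (by exact_mod_cast hpp.one_lt.le)
    positivity
  have hEle : E ≤ 4 * n * K := by
    calc E ≤ ∑ p ∈ P, 4 * (n:ℝ) / (p:ℝ)^((3:ℝ)/2) := by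
          apply Finset.sum_le_sum
          intro p hp
          obtain ⟨hpp, hpn⟩ := hmem p hp
          exact tail_term_le n p hpp hpn
      _ = 4 * n * ∑ p ∈ P, 1 / (p:ℝ)^((3:ℝ)/2) := by
          rw [Finset.mul_sum]
          apply Finset.sum_congr rfl
          intro p _
          ring
      _ ≤ 4 * n * K := by
          apply mul_le_mul_of_nonneg_left _ (by positivity)
          exact Summable.sum_le_tsum P (fun m _ => by positivity) hsummable
  have hA_le : A ≤ (n:ℝ) * T := by
    rw [hTdef, Finset.mul_sum, hAdef]
    apply Finset.sum_le_sum
    intro p hp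
    obtain ⟨hpp, _⟩ := hmem p hp
    have hlog0 : 0 ≤ Real.log p := Real.log_nonneg (by exact_mod_cast hpp.one_lt.le)
    have := Nat.cast_div_le (m := n) (n := p) (α := ℝ)
    calc ((n / p : ℕ) : ℝ) * Real.log p ≤ ((n:ℝ) / p) * Real.log p :=
          mul_le_mul_of_nonneg_right this hlog0
      _ = (n:ℝ) * (Real.log p / p) := by ring
  have hA_ge : (n:ℝ) * T - ∑ p ∈ P, Real.log p ≤ A := by
    rw [hTdef, Finset.mul_sum, ← Finset.sum_sub_distrib, hAdef]
    apply Finset.sum_le_sum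
    intro p hp
    obtain ⟨hpp, _⟩ := hmem p hp
    have hp0 : (0:ℝ) < p := by exact_mod_cast hpp.pos
    have hlog0 : 0 ≤ Real.log p := Real.log_nonneg (by exact_mod_cast hpp.one_lt.le)
    have hlt : (n:ℝ) < (p:ℝ) * ((n / p : ℕ) : ℝ) + p := by
      have h1 : n < p * (n / p) + p := by
        have := Nat.div_add_mod n p
        have := Nat.mod_lt n hpp.pos
        omega
      exact_mod_cast h1
    have hfl : (n:ℝ) / p - 1 ≤ ((n / p : ℕ) : ℝ) := by
      rw [div_sub_one hp0.ne', div_le_iff₀ hp0]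
      nlinarith
    calc (n:ℝ) * (Real.log p / p) - Real.log p = ((n:ℝ)/p - 1) * Real.log p := by ring
      _ ≤ ((n / p : ℕ) : ℝ) * Real.log p := mul_le_mul_of_nonneg_right hfl hlog0
  have htheta := theta_le n
  have hfl := log_fact_lower n (by omega)
  have hfu := log_fact_upper n
  have hupper : T - Real.log n ≤ Real.log 4 := by
    have h1 : (n:ℝ) * T ≤ (n:ℝ) * Real.log n + (n:ℝ) * Real.log 4 := by
      have : (n:ℝ) * T ≤ A + (n:ℝ) * Real.log 4 := by linarith
      linarith
    have := (mul_le_mul_iff_right₀ hn0).mp (by linarith : (n:ℝ) * T ≤ (n:ℝ) * (Real.log n + Real.log 4))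
    linarith
  have hlower : -(1 + 4*K) ≤ T - Real.log n := by
    have h1 : (n:ℝ) * (Real.log n - (1 + 4*K)) ≤ (n:ℝ) * T := by
      have : (n:ℝ) * Real.log n - n - 4*n*K ≤ A := by linarith
      nlinarith
    have := (mul_le_mul_iff_right₀ hn0).mp h1
    linarith
  rw [abs_le]
  constructor <;> linarith
end

theorem stmt_17 :
    ∃ C : ℝ, ∀ x : ℝ, 2 ≤ x →
      |(∑ p ∈ Finset.filter Nat.Prime (Finset.range (Nat.floor x + 1)),
          Real.log p / p) - Real.log x| ≤ C := by
  refine ⟨(Real.log 4 + 1 + 4 * ∑' m : ℕ, 1 / (m:ℝ)^((3:ℝ)/2)) + Real.log 2, ?_⟩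
  intro x hx
  set n := Nat.floor x with hndef
  have hn : 2 ≤ n := Nat.le_floor (by exact_mod_cast hx)
  have hx0 : (0:ℝ) ≤ x := by linarith
  have hnx : (n:ℝ) ≤ x := Nat.floor_le hx0
  have hnR : (2:ℝ) ≤ n := by exact_mod_cast hn
  have hn0 : (0:ℝ) < n := by linarith
  have hxlt : x < n + 1 := Nat.lt_floor_add_one x
  have h2n : x ≤ 2 * n := by linarith
  have hlog1 : Real.log n ≤ Real.log x := Real.log_le_log hn0 hnx
  have hlog2 : Real.log x ≤ Real.log 2 + Real.log n := by
    have := Real.log_le_log (by linarith : (0:ℝ) < x) h2n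
    rwa [Real.log_mul (by norm_num) hn0.ne'] at this
  have hm := mertens_nat n hn
  rw [abs_le] at hm ⊢
  constructor <;> [skip; skip] <;> [linarith [hm.1]; linarith [hm.2]]
end
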